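/- Let A ⊆ ℝ² be a Jordan domain with Lipschitz-regular boundary, i ∈ {1,2} (with B¹ = A, B² = A*), and let F : ℝ² → ℝ² be such that q ↦ F(−q) is measurable and continuous on B^i ∩ (∂A)_{⊕r₀} for some r₀ > 0. Let β ∈ [1,2] and let ψ and ψ_μ be characteristic exponents of infinitely divisible distributions on ℝ such that r·ψ(r^{−1/β} z) → ψ_μ(z) for every z ∈ ℝ as r ↓ 0. Then (a) ψ_μ(z) = c·ψ_μ(c^{−1/β} z) for all c > 0 and z ∈ ℝ (the limiting distribution μ is strictly β-stable), and (b) for every n ∈ ℕ, p₁,…,p_n ∈ ℝ² and z₁,…,z_n ∈ ℝ, ∫_{∪_{j=1}^n (∂A+p_j)_{⊕r}} |ψ(r^{−1/β} z^i_r(q)) − ψ_μ(r^{−1/β} z^i_r(q))| dq → 0 as r ↓ 0, where z^i_r(q) := Σ_{j=1}^n 1_{(∂A+p_j)_{⊕r}}(q) z_j ∫₀^{2π} 1_{B^i+p_j}(q + r u(θ)) F(p_j − q − r u(θ)) · u(θ) dθ; the same convergence holds when u(θ) in the dot product is replaced by u^⊥(θ). -/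

import Mathlib

open MeasureTheory Filter Set Metric

noncomputable section

abbrev V2 : Type := EuclideanSpace ℝ (Fin 2)

/-- The unit vector `(cos θ, sin θ)`. -/
def uvec (θ : ℝ) : V2 := WithLp.toLp 2 ![Real.cos θ, Real.sin θ]

/-- The unit vector `(-sin θ, cos θ)`, perpendicular to `uvec θ`. -/
def uperp (θ : ℝ) : V2 := WithLp.toLp 2 ![-Real.sin θ, Real.cos θ]

/-- The counterclockwise perpendicular `x^⊥ = (-x₂, x₁)`. -/
def perpv (v : V2) : V2 := WithLp.toLp 2 ![-(v 1), v 0]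

/-- The tangent cone of `S` at `p`. -/
def TanCone (S : Set V2) (p : V2) : Set V2 :=
  {v | ∃ ps : ℕ → V2, (∀ n, ps n ∈ S \ {p}) ∧
    Tendsto ps atTop (nhds p) ∧
    Tendsto (fun n => ‖ps n - p‖⁻¹ • (ps n - p)) atTop (nhds (‖v‖⁻¹ • v))}

/-- The normal cone of `S` at `p`. -/
def NorCone (S : Set V2) (p : V2) : Set V2 :=
  {u | ∀ v ∈ TanCone S p, (inner ℝ u v : ℝ) ≤ 0}

/-- `C` is a Jordan curve. -/
def IsJordanCurve (C : Set V2) : Prop :=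
  C.Nonempty ∧ ∃ φ : ℝ → V2, ContinuousOn φ (Icc 0 1) ∧ InjOn φ (Ioo 0 1) ∧
    φ 0 = φ 1 ∧ φ '' Icc 0 1 = C

/-- `A` is a Jordan domain. -/
def IsJordanDomain (A : Set V2) : Prop :=
  IsCompact A ∧ IsConnected (interior A) ∧ IsJordanCurve (frontier A)

/-- `q` is a regular boundary point of `A`, with outward unit normal `uA q`. -/
def RegularAt (A : Set V2) (uA : V2 → V2) (q : V2) : Prop :=
  ‖uA q‖ = 1 ∧ (∀ v ∈ TanCone (frontier A) q, (inner ℝ (uA q) v : ℝ) = 0) ∧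
  NorCone A q = {w | ∃ l : ℝ, 0 ≤ l ∧ w = l • uA q} ∧
  NorCone (closure Aᶜ) q = {w | ∃ l : ℝ, 0 ≤ l ∧ w = -(l • uA q)}

/-- The Jordan domain `A` has Lipschitz-regular boundary, with outward unit
normal field `uA` (set to `0` at the `H¹`-null set of irregular points). -/
def LipschitzRegular (A : Set V2) (uA : V2 → V2) : Prop :=
  (∃ (K : NNReal) (φ : ℝ → V2), LipschitzOnWith K φ (Icc 0 1) ∧ InjOn φ (Ioo 0 1) ∧
    φ 0 = φ 1 ∧ φ '' Icc 0 1 = frontier A) ∧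
  (∀ q ∈ frontier A, RegularAt A uA q ∨ uA q = 0) ∧
  μH[1] {q | q ∈ frontier A ∧ ¬ RegularAt A uA q} = 0

/-- `B¹ = A`, `B² = A* = closure Aᶜ`. -/
def Bset (A : Set V2) (i : ℕ) : Set V2 := if i = 1 then A else closure Aᶜ

/-- The circle flux `G^i_{r,D}(s,q)`. -/
def GD (A : Set V2) (uA : V2 → V2) (F : V2 → V2) (i : ℕ) (r s : ℝ) (q : V2) : ℝ :=
  r * ∫ θ in (0:ℝ)..(2 * Real.pi),
    (Bset A i).indicator (fun x => (inner ℝ (F x) (uvec θ) : ℝ))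
      (q + (r * s) • uA q + r • uvec θ)

/-- The circle circulation `G^i_{r,C}(s,q)`. -/
def GC (A : Set V2) (uA : V2 → V2) (F : V2 → V2) (i : ℕ) (r s : ℝ) (q : V2) : ℝ :=
  r * ∫ θ in (0:ℝ)..(2 * Real.pi),
    (Bset A i).indicator (fun x => (inner ℝ (F x) (uperp θ) : ℝ))
      (q + (r * s) • uA q + r • uvec θ)

end

noncomputable section

/-- `ψ` is the characteristic exponent of an infinitely divisible distribution on `ℝ`:
`ψ(z) = iγz − b²z²/2 + ∫ (e^{izx} − 1 − izx 1_{|x|≤1}) ν(dx)` for a Lévy triplet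
`(γ, b, ν)`. -/
def IsIDExponent (ψ : ℝ → ℂ) : Prop :=
  ∃ (γ b : ℝ) (ν : Measure ℝ), 0 ≤ b ∧ ν {0} = 0 ∧
    (∫⁻ x, ENNReal.ofReal (min 1 (x ^ 2)) ∂ν) < ⊤ ∧
    ∀ z : ℝ, ψ z = Complex.I * γ * z - b ^ 2 * z ^ 2 / 2 +
      ∫ x, (Complex.exp (Complex.I * z * x) - 1 -
        Complex.I * z * x * (if |x| ≤ 1 then 1 else 0)) ∂ν

/-- The function `z^i_r(q)` of Lemma B.3: a weighted sum of normalized circle fluxes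
around the translated boundaries `∂A + pⱼ`. -/
def zfun (A : Set V2) (F : V2 → V2) (i : ℕ) {n : ℕ}
    (p : Fin n → V2) (zc : Fin n → ℝ) (r : ℝ) (q : V2) : ℝ :=
  ∑ j, Set.indicator (Metric.cthickening r ((· + p j) '' frontier A))
    (fun _ => zc j * ∫ θ in (0:ℝ)..(2 * Real.pi),
      ((· + p j) '' Bset A i).indicator
        (fun x => (inner ℝ (F (p j - x)) (uvec θ) : ℝ)) (q + r • uvec θ)) q

/-- Variant of `zfun` with the circulation (`u^⊥(θ)`) instead of the flux. -/
def zfunC (A : Set V2) (F : V2 → V2) (i : ℕ) {n : ℕ}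
    (p : Fin n → V2) (zc : Fin n → ℝ) (r : ℝ) (q : V2) : ℝ :=
  ∑ j, Set.indicator (Metric.cthickening r ((· + p j) '' frontier A))
    (fun _ => zc j * ∫ θ in (0:ℝ)..(2 * Real.pi),
      ((· + p j) '' Bset A i).indicator
        (fun x => (inner ℝ (F (p j - x)) (uperp θ) : ℝ)) (q + r • uvec θ)) q

end


section AuxLemmas

lemma aux_id_integrand_bound (z x : ℝ) :
    ‖Complex.exp (Complex.I * z * x) - 1 -
      Complex.I * z * x * (if |x| ≤ 1 then 1 else 0)‖ ≤
    max (3 * z ^ 2) 2 * min 1 (x ^ 2) := by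
  by_cases hx : |x| ≤ 1
  · rw [if_pos hx, mul_one]
    have hmin : min 1 (x ^ 2) = x ^ 2 := by
      rw [min_eq_right]; nlinarith [abs_nonneg x, sq_abs x]
    rw [hmin]
    have key : ‖Complex.exp (Complex.I * z * x) - 1 - Complex.I * z * x‖
        ≤ 3 * (z * x) ^ 2 := by
      set w : ℂ := Complex.I * z * x with hw
      have habsw : ‖w‖ = |z * x| := by
        simp [hw, Complex.norm_exp, abs_mul, mul_assoc, ← Complex.ofReal_mul]
      by_cases h1 : |z * x| ≤ 1
      · have := Complex.exp_bound (x := w) (by rw [habsw]; exact h1) (n := 2) (by norm_num)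
        have e2 : ∑ m ∈ Finset.range 2, w ^ m / (m.factorial : ℂ) = 1 + w := by
          simp [Finset.sum_range_succ]
        rw [e2] at this
        have : ‖Complex.exp w - (1 + w)‖ ≤ ‖w‖ ^ 2 := by
          refine this.trans ?_
          have : ‖w‖ ^ 2 * ((2+1 : ℕ) * (((2:ℕ).factorial : ℝ) * 2)⁻¹) ≤
              ‖w‖ ^ 2 * 1 := by
            apply mul_le_mul_of_nonneg_left _ (by positivity)
            norm_num [Nat.factorial]
          simpa using this.trans (by simp)
        calc ‖Complex.exp w - 1 - w‖ = ‖Complex.exp w - (1 + w)‖ := by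
              ring_nf
          _ ≤ ‖w‖ ^ 2 := this
          _ = (z*x)^2 := by rw [habsw, sq_abs]
          _ ≤ 3 * (z*x)^2 := by nlinarith [sq_nonneg (z*x)]
      · push_neg at h1
        have h2 : ‖Complex.exp w‖ = 1 := by
          rw [hw, Complex.norm_exp]
          have : (Complex.I * z * x).re = 0 := by simp
          simp [this]
        have h3 : (z*x)^2 ≥ 1 := by nlinarith [abs_nonneg (z*x), sq_abs (z*x)]
        calc ‖Complex.exp w - 1 - w‖
            ≤ ‖Complex.exp w - 1‖ + ‖w‖ := by
              have := norm_sub_le (Complex.exp w - 1) w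
              simpa [sub_sub] using this
          _ ≤ (‖Complex.exp w‖ + 1) + |z*x| := by
              gcongr; · exact (norm_sub_le _ _).trans (by simp)
              · rw [habsw]
          _ = 2 + |z*x| := by rw [h2]; ring
          _ ≤ 3 * (z*x)^2 := by nlinarith [sq_abs (z*x), abs_nonneg (z*x)]
    calc ‖_‖ ≤ 3 * (z*x)^2 := key
      _ = 3 * z^2 * x^2 := by ring
      _ ≤ max (3*z^2) 2 * x^2 := by
          apply mul_le_mul_of_nonneg_right (le_max_left _ _) (sq_nonneg x)
  · rw [if_neg hx, mul_zero, sub_zero]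
    have hmin : min 1 (x ^ 2) = 1 := by
      rw [min_eq_left]; nlinarith [abs_nonneg x, sq_abs x, not_le.mp hx]
    rw [hmin, mul_one]
    have h2 : ‖Complex.exp (Complex.I * z * x)‖ = 1 := by
      rw [Complex.norm_exp]
      have : (Complex.I * z * x).re = 0 := by simp
      simp [this]
    calc ‖Complex.exp (Complex.I * z * x) - 1‖
        ≤ ‖Complex.exp (Complex.I * z * x)‖ + 1 :=
          (norm_sub_le _ _).trans (by simp)
      _ = 2 := by rw [h2]; norm_num
      _ ≤ max (3*z^2) 2 := le_max_right _ _

lemma IsIDExponent.zero {ψ : ℝ → ℂ} (h : IsIDExponent ψ) : ψ 0 = 0 := by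
  obtain ⟨γ, b, ν, hb, h0, hfin, hψ⟩ := h
  have := hψ 0
  simpa using this

lemma IsIDExponent.bounded {ψ : ℝ → ℂ} (h : IsIDExponent ψ) (R : ℝ) :
    ∃ C₀ : ℝ, 0 ≤ C₀ ∧ ∀ w : ℝ, |w| ≤ R → ‖ψ w‖ ≤ C₀ := by
  obtain ⟨γ, b, ν, hb, h0, hfin, hψ⟩ := h
  have hmin_int : Integrable (fun x => min 1 (x ^ 2)) ν := by
    refine ⟨(Continuous.min continuous_const (by continuity)).aestronglyMeasurable, ?_⟩
    rw [hasFiniteIntegral_iff_ofReal (ae_of_all _ fun x => le_min zero_le_one (sq_nonneg x))]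
    exact hfin
  set Iν : ℝ := ∫ x, min 1 (x ^ 2) ∂ν with hIν
  have hIν0 : 0 ≤ Iν := integral_nonneg fun x => le_min zero_le_one (sq_nonneg x)
  refine ⟨|γ| * |R| + b ^ 2 * R ^ 2 / 2 + max (3 * R ^ 2) 2 * Iν, by positivity, fun w hw => ?_⟩
  · have hR0 : 0 ≤ R := (abs_nonneg w).trans hw
    have hw' : |w| ≤ |R| := hw.trans (le_abs_self R)
    have hw2 : w ^ 2 ≤ R ^ 2 := by nlinarith [sq_abs w, abs_nonneg w]
    rw [hψ w]
    have hint : ‖∫ x, (Complex.exp (Complex.I * w * x) - 1 -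
        Complex.I * w * x * (if |x| ≤ 1 then 1 else 0)) ∂ν‖ ≤ max (3 * R ^ 2) 2 * Iν := by
      have hg : Integrable (fun x => max (3 * R ^ 2) 2 * min 1 (x ^ 2)) ν :=
        hmin_int.const_mul _
      refine (norm_integral_le_of_norm_le hg (ae_of_all _ fun x => ?_)).trans ?_
      · refine (aux_id_integrand_bound w x).trans ?_
        have : max (3 * w ^ 2) 2 ≤ max (3 * R ^ 2) 2 := by
          apply max_le_max _ le_rfl; nlinarith
        apply mul_le_mul_of_nonneg_right this (le_min zero_le_one (sq_nonneg x))
      · rw [MeasureTheory.integral_const_mul]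
    calc ‖_‖ ≤ ‖Complex.I * γ * w - b ^ 2 * w ^ 2 / 2‖ +
          ‖∫ x, (Complex.exp (Complex.I * w * x) - 1 -
            Complex.I * w * x * (if |x| ≤ 1 then 1 else 0)) ∂ν‖ := norm_add_le _ _
      _ ≤ (‖Complex.I * γ * w‖ + ‖(b:ℂ) ^ 2 * w ^ 2 / 2‖) +
            max (3 * R ^ 2) 2 * Iν := by gcongr; exact norm_sub_le _ _
      _ ≤ (|γ| * |R| + b ^ 2 * R ^ 2 / 2) + max (3 * R ^ 2) 2 * Iν := by
          gcongr
          · have : ‖Complex.I * γ * w‖ = |γ| * |w| := by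
              simp [Complex.norm_real]
            rw [this]
            exact mul_le_mul_of_nonneg_left hw' (abs_nonneg γ)
          · have : ‖(b:ℂ) ^ 2 * w ^ 2 / 2‖ = b ^ 2 * w ^ 2 / 2 := by
              rw [norm_div, norm_mul, norm_pow, norm_pow, Complex.norm_real, Complex.norm_real,
                Complex.norm_two, Real.norm_eq_abs, Real.norm_eq_abs, sq_abs, sq_abs]
            rw [this]; nlinarith [sq_nonneg b]
      _ = _ := by ring

section Conv
variable {β : ℝ} {ψ ψμ : ℝ → ℂ}

lemma aux_scalingA (hβ1 : 1 ≤ β)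
    (hconv : ∀ z : ℝ, Tendsto (fun r : ℝ => (r : ℂ) * ψ (r ^ (-1/β) * z))
      (nhdsWithin 0 (Set.Ioi 0)) (nhds (ψμ z))) :
    ∀ c : ℝ, 0 < c → ∀ z : ℝ, ψμ z = (c : ℂ) * ψμ (c ^ (-1/β) * z) := by
  intro c hc z
  have hβ0 : β ≠ 0 := by linarith
  have hmap : Tendsto (fun r : ℝ => c * r) (nhdsWithin 0 (Set.Ioi 0))
      (nhdsWithin 0 (Set.Ioi 0)) := by
    rw [tendsto_nhdsWithin_iff]
    constructor
    · have h : Continuous (fun r : ℝ => c * r) := continuous_const.mul continuous_id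
      have := h.tendsto (0:ℝ)
      simp only [mul_zero] at this
      exact this.mono_left nhdsWithin_le_nhds
    · filter_upwards [self_mem_nhdsWithin] with r (hr : r ∈ Set.Ioi (0:ℝ))
      exact mul_pos hc hr
  have h1 : Tendsto (fun r : ℝ => ((c * r : ℝ) : ℂ) * ψ ((c * r) ^ (-1/β) * z))
      (nhdsWithin 0 (Set.Ioi 0)) (nhds (ψμ z)) := (hconv z).comp hmap
  have h2 : Tendsto (fun r : ℝ => ((c * r : ℝ) : ℂ) * ψ ((c * r) ^ (-1/β) * z))
      (nhdsWithin 0 (Set.Ioi 0)) (nhds ((c:ℂ) * ψμ (c ^ (-1/β) * z))) := by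
    have base := (hconv (c ^ (-1/β) * z)).const_mul (c : ℂ)
    apply base.congr'
    filter_upwards [self_mem_nhdsWithin] with r hr
    have hr0 : (0:ℝ) < r := hr
    have hrw : (c * r) ^ (-1/β) = c ^ (-1/β) * r ^ (-1/β) :=
      Real.mul_rpow hc.le hr0.le
    push_cast
    rw [hrw]
    ring_nf
  exact tendsto_nhds_unique h1 h2

lemma aux_limU (hβ1 : 1 ≤ β)
    (hconv : ∀ z : ℝ, Tendsto (fun r : ℝ => (r : ℂ) * ψ (r ^ (-1/β) * z))
      (nhdsWithin 0 (Set.Ioi 0)) (nhds (ψμ z))) :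
    ∀ z : ℝ, Tendsto (fun T : ℝ => ((T ^ (-β) : ℝ) : ℂ) * ψ (T * z))
      atTop (nhds (ψμ z)) := by
  intro z
  have hβ0 : β ≠ 0 := by linarith
  have hβpos : 0 < β := by linarith
  have hmap : Tendsto (fun T : ℝ => T ^ (-β)) atTop (nhdsWithin 0 (Set.Ioi 0)) := by
    rw [tendsto_nhdsWithin_iff]
    constructor
    · exact tendsto_rpow_neg_atTop hβpos
    · filter_upwards [eventually_gt_atTop (0:ℝ)] with T hT
      exact Real.rpow_pos_of_pos hT _
  have h1 := (hconv z).comp hmap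
  apply h1.congr'
  filter_upwards [eventually_gt_atTop (0:ℝ)] with T hT
  have : (T ^ (-β)) ^ (-1/β) = T := by
    rw [← Real.rpow_mul hT.le]
    rw [show (-β) * (-1/β) = 1 by field_simp]
    exact Real.rpow_one T
  simp only [Function.comp_apply, this]

set_option maxHeartbeats 1000000 in
lemma aux_unifT1 (hβ1 : 1 ≤ β)
    (hscal : ∀ c : ℝ, 0 < c → ∀ z : ℝ, ψμ z = (c : ℂ) * ψμ (c ^ (-1/β) * z))
    (hlim : ∀ z : ℝ, Tendsto (fun T : ℝ => ((T ^ (-β) : ℝ) : ℂ) * ψ (T * z))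
      atTop (nhds (ψμ z)))
    (hψ0 : ψ 0 = 0) (hψμ0 : ψμ 0 = 0)
    (hbdd : ∀ R : ℝ, ∃ C₀ : ℝ, 0 ≤ C₀ ∧ ∀ w : ℝ, |w| ≤ R → ‖ψ w‖ ≤ C₀)
    (M ε : ℝ) (hε : 0 < ε) :
    ∀ᶠ (r : ℝ) in nhdsWithin (0:ℝ) (Set.Ioi 0), ∀ z : ℝ, |z| ≤ M →
      ‖(r : ℂ) * ψ (r ^ (-1/β) * z) - ψμ z‖ ≤ ε := by
  have hβ0 : (0:ℝ) < β := by linarith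
  set M' : ℝ := max M 1 with hM'
  have hM'1 : (1:ℝ) ≤ M' := le_max_right _ _
  have hM'0 : (0:ℝ) < M' := lt_of_lt_of_le one_pos hM'1
  set Cm : ℝ := max (‖ψμ 1‖) (‖ψμ (-1)‖) with hCm
  have hCm0 : 0 ≤ Cm := le_trans (norm_nonneg _) (le_max_left _ _)
  set ε₁ : ℝ := ε / (M' ^ β + 1) with hε₁
  have hMβ0 : (0:ℝ) < M' ^ β := Real.rpow_pos_of_pos hM'0 _
  have hε₁0 : 0 < ε₁ := by positivity
  have h1 := (hlim 1).eventually (Metric.closedBall_mem_nhds (ψμ 1) hε₁0)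
  have h2 := (hlim (-1)).eventually (Metric.closedBall_mem_nhds (ψμ (-1)) hε₁0)
  obtain ⟨T₀, hT₀⟩ := (h1.and h2).exists_forall_of_atTop
  set T₁ : ℝ := max T₀ 1 with hT₁
  have hT₁1 : (1:ℝ) ≤ T₁ := le_max_right _ _
  have hT₁0 : (0:ℝ) < T₁ := lt_of_lt_of_le one_pos hT₁1
  have hTbd : ∀ T ≥ T₁, ∀ s : ℝ, (s = 1 ∨ s = -1) →
      ‖((T ^ (-β) : ℝ) : ℂ) * ψ (T * s) - ψμ s‖ ≤ ε₁ := by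
    intro T hT s hs
    have := hT₀ T (le_trans (le_max_left _ _) hT)
    rcases hs with rfl | rfl
    · have := this.1; rwa [Complex.dist_eq] at this
    · have := this.2; rwa [Complex.dist_eq] at this
  obtain ⟨C₀, hC₀0, hC₀⟩ := hbdd T₁
  set δ : ℝ := ε / (C₀ + T₁ ^ β * Cm + 1) with hδ
  have hT₁β : (0:ℝ) < T₁ ^ β := Real.rpow_pos_of_pos hT₁0 _
  have hδ0 : 0 < δ := by positivity
  filter_upwards [Ioo_mem_nhdsGT_of_mem (Set.mem_Ico.mpr ⟨le_refl 0, hδ0⟩)] with r hr z hz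
  obtain ⟨hr0, hrδ⟩ : (0:ℝ) < r ∧ r < δ := ⟨hr.1, hr.2⟩
  by_cases hz0 : z = 0
  · subst hz0
    simp [hψ0, hψμ0]
    exact hε.le
  · set a : ℝ := |z| with ha
    have ha0 : 0 < a := abs_pos.mpr hz0
    set s : ℝ := z / a with hs
    have hsval : s = 1 ∨ s = -1 := by
      rcases lt_or_gt_of_ne hz0 with h | h
      · right; rw [hs, ha, abs_of_neg h]; field_simp
      · left; rw [hs, ha, abs_of_pos h]; field_simp
    have has : a * s = z := by rw [hs]; field_simp
    set T : ℝ := r ^ (-1/β) * a with hT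
    have hrp : (0:ℝ) < r ^ (-1/β) := Real.rpow_pos_of_pos hr0 _
    have hTpos : 0 < T := mul_pos hrp ha0
    have hi : r ^ (-1/β) * z = T * s := by rw [hT, ← has]; ring
    have hTmb : T ^ (-β) = r * a ^ (-β) := by
      rw [hT, Real.mul_rpow hrp.le ha0.le, ← Real.rpow_mul hr0.le,
        show (-1/β) * (-β) = 1 by field_simp, Real.rpow_one]
    have hii : r = a ^ β * T ^ (-β) := by
      rw [hTmb, ← mul_assoc, mul_comm (a ^ β) r, mul_assoc, ← Real.rpow_add ha0]
      simp
    have hiii : ψμ z = ((a ^ β : ℝ) : ℂ) * ψμ s := by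
      have h := hscal (a ^ β) (Real.rpow_pos_of_pos ha0 _) z
      rw [← Real.rpow_mul ha0.le, show β * (-1/β) = -1 by field_simp,
        Real.rpow_neg_one] at h
      have : a⁻¹ * z = s := by rw [hs, inv_mul_eq_div]
      rwa [this] at h
    have key : ‖(r : ℂ) * ψ (r ^ (-1/β) * z) - ψμ z‖
        = a ^ β * ‖((T ^ (-β) : ℝ) : ℂ) * ψ (T * s) - ψμ s‖ := by
      rw [hi, hiii, show ((r:ℝ):ℂ) = ((a ^ β : ℝ):ℂ) * ((T ^ (-β) : ℝ):ℂ) by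
        rw [← Complex.ofReal_mul, ← hii]]
      rw [show ((a^β:ℝ):ℂ) * ((T^(-β):ℝ):ℂ) * ψ (T*s) - ((a^β:ℝ):ℂ) * ψμ s
          = ((a^β:ℝ):ℂ) * (((T^(-β):ℝ):ℂ) * ψ (T*s) - ψμ s) by ring]
      rw [norm_mul, Complex.norm_real, Real.norm_eq_abs, abs_of_nonneg (Real.rpow_nonneg ha0.le _)]
    have habs_s : |s| = 1 := by rcases hsval with h | h <;> rw [h] <;> norm_num
    have hψμs : ‖ψμ s‖ ≤ Cm := by
      rcases hsval with h | h <;> rw [h]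
      · exact le_max_left _ _
      · exact le_max_right _ _
    by_cases hTT : T₁ ≤ T
    · rw [key]
      have h1 : ‖((T ^ (-β) : ℝ) : ℂ) * ψ (T * s) - ψμ s‖ ≤ ε₁ :=
        hTbd T hTT s hsval
      have h2 : a ^ β ≤ M' ^ β :=
        Real.rpow_le_rpow ha0.le (le_trans hz (le_max_left M 1)) hβ0.le
      calc a ^ β * ‖((T ^ (-β) : ℝ) : ℂ) * ψ (T * s) - ψμ s‖
          ≤ M' ^ β * ε₁ := mul_le_mul h2 h1 (norm_nonneg _) (le_of_lt hMβ0)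
        _ ≤ ε := by rw [hε₁]; rw [div_eq_mul_inv]
                    rw [← mul_assoc]
                    rw [mul_inv_le_iff₀ (by positivity)]
                    nlinarith
    · push_neg at hTT
      rw [key]
      have hTβ : T ^ β ≤ T₁ ^ β := Real.rpow_le_rpow hTpos.le hTT.le hβ0.le
      have haβ : a ^ β = r * T ^ β := by
        rw [hii, Real.rpow_neg hTpos.le]
        field_simp
      have hbd1 : ‖ψ (T * s)‖ ≤ C₀ := by
        apply hC₀
        rw [abs_mul, habs_s, mul_one, abs_of_nonneg hTpos.le]
        exact hTT.le
      have hbd : ‖((T ^ (-β) : ℝ) : ℂ) * ψ (T * s) - ψμ s‖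
          ≤ T ^ (-β) * C₀ + Cm := by
        calc ‖((T ^ (-β) : ℝ) : ℂ) * ψ (T * s) - ψμ s‖
            ≤ ‖((T ^ (-β) : ℝ) : ℂ) * ψ (T * s)‖ + ‖ψμ s‖ :=
              norm_sub_le _ _
          _ ≤ T ^ (-β) * C₀ + Cm := by
              gcongr
              rw [norm_mul, Complex.norm_real, Real.norm_eq_abs,
                abs_of_nonneg (Real.rpow_nonneg hTpos.le _)]
              exact mul_le_mul_of_nonneg_left hbd1 (Real.rpow_nonneg hTpos.le _)
      calc a ^ β * ‖((T ^ (-β) : ℝ) : ℂ) * ψ (T * s) - ψμ s‖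
          ≤ a ^ β * (T ^ (-β) * C₀ + Cm) :=
            mul_le_mul_of_nonneg_left hbd (Real.rpow_nonneg ha0.le _)
        _ = r * C₀ + a ^ β * Cm := by
            rw [mul_add, ← mul_assoc, ← hii]
        _ ≤ r * C₀ + (r * T₁ ^ β) * Cm := by
            gcongr
            rw [haβ]
            gcongr
        _ = r * (C₀ + T₁ ^ β * Cm) := by ring
        _ ≤ ε := by
            have : r * (C₀ + T₁ ^ β * Cm) ≤ r * (C₀ + T₁ ^ β * Cm + 1) := by nlinarith
            refine this.trans ?_
            have := hrδ
            rw [hδ, lt_div_iff₀ (by positivity)] at this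
            nlinarith

end Conv


section Geometry

lemma aux_near_point (t : ℝ) (ht : t ∈ Set.Icc (0:ℝ) 1) (N : ℕ) (hN : 0 < N) :
    ∃ k : ℕ, k < N ∧ |t - k / N| ≤ 1 / N := by
  have hN0 : (0:ℝ) < N := by exact_mod_cast hN
  by_cases hk : ⌊t * N⌋₊ < N
  · refine ⟨⌊t * N⌋₊, hk, ?_⟩
    have h1 : (⌊t * N⌋₊ : ℝ) ≤ t * N := Nat.floor_le (by nlinarith [ht.1])
    have h2 : t * N < ⌊t * N⌋₊ + 1 := Nat.lt_floor_add_one _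
    have e1 : (⌊t * N⌋₊:ℝ)/N ≤ t := by rw [div_le_iff₀ hN0]; exact h1
    have e2 : t ≤ ((⌊t * N⌋₊:ℝ) + 1)/N := by rw [le_div_iff₀ hN0]; exact h2.le
    rw [abs_of_nonneg (by linarith)]
    have : ((⌊t * N⌋₊:ℝ) + 1)/N - (⌊t * N⌋₊:ℝ)/N = 1/N := by field_simp; ring
    linarith
  · refine ⟨N - 1, by omega, ?_⟩
    push_neg at hk
    have h1 : (N:ℝ) ≤ t * N := by
      calc (N:ℝ) ≤ ⌊t * N⌋₊ := by exact_mod_cast hk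
        _ ≤ t * N := Nat.floor_le (by nlinarith [ht.1])
    have ht1 : t = 1 := le_antisymm ht.2 (by nlinarith)
    subst ht1
    have hc : ((N - 1 : ℕ) : ℝ) = (N : ℝ) - 1 := by
      have h1' : (1:ℕ) ≤ N := hN
      push_cast [Nat.cast_sub h1']
      ring
    rw [hc]
    have : 1 - ((N:ℝ) - 1)/N = 1/N := by field_simp; ring
    rw [this, abs_of_nonneg (by positivity : (0:ℝ) ≤ 1/N)]

lemma aux_vol_cthickening_le {K : NNReal} {φ : ℝ → V2} (hφ : LipschitzOnWith K φ (Set.Icc 0 1)) :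
    ∃ C : ℝ, 0 ≤ C ∧ ∀ r : ℝ, 0 < r → r ≤ 1 →
      volume (cthickening r (φ '' Set.Icc 0 1)) ≤ ENNReal.ofReal (C * r) := by
  set S := φ '' Set.Icc 0 1 with hS
  have hScomp : IsCompact S := (isCompact_Icc).image_of_continuousOn hφ.continuousOn
  have hSne : S.Nonempty := ⟨φ 0, 0, by norm_num, rfl⟩
  set V : ℝ := (volume (Metric.ball (0:V2) 1)).toReal with hV
  have hV0 : 0 ≤ V := ENNReal.toReal_nonneg
  refine ⟨2 * ((K:ℝ) + 1)^2 * V, by positivity, fun r hr hr1 => ?_⟩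
  set N : ℕ := ⌈1/r⌉₊ with hN
  have hNpos : 0 < N := Nat.ceil_pos.mpr (by positivity)
  have hN0 : (0:ℝ) < N := by exact_mod_cast hNpos
  have hinvN : 1/(N:ℝ) ≤ r := by
    rw [div_le_iff₀ hN0]
    have h1 : 1/r ≤ (N:ℝ) := Nat.le_ceil _
    rw [div_le_iff₀ hr] at h1
    linarith
  have hNr : (N:ℝ) * r ≤ 2 := by
    have h2 : (N:ℝ) < 1/r + 1 := Nat.ceil_lt_add_one (by positivity)
    have h3 : (1/r + 1) * r = 1 + r := by field_simp
    nlinarith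
  have hcover : cthickening r S ⊆
      ⋃ k ∈ Finset.range N, Metric.closedBall (φ ((k:ℝ)/N)) (((K:ℝ) + 1) * r) := by
    intro y hy
    have h1 : EMetric.infEdist y S ≤ ENNReal.ofReal r := mem_cthickening_iff.mp hy
    have h2 : Metric.infDist y S ≤ r := by
      have := ENNReal.toReal_mono ENNReal.ofReal_ne_top h1
      rwa [ENNReal.toReal_ofReal hr.le] at this
    obtain ⟨x, hxS, hxd⟩ := hScomp.exists_infDist_eq_dist hSne y
    obtain ⟨t, ht, rfl⟩ := hxS
    obtain ⟨k, hkN, hk⟩ := aux_near_point t ht N hNpos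
    have hkmem : (k:ℝ)/N ∈ Set.Icc (0:ℝ) 1 := by
      constructor
      · positivity
      · rw [div_le_one hN0]; exact_mod_cast hkN.le
    have hd1 : dist (φ t) (φ ((k:ℝ)/N)) ≤ (K:ℝ) * r := by
      calc dist (φ t) (φ ((k:ℝ)/N)) ≤ (K:ℝ) * dist t ((k:ℝ)/N) :=
            hφ.dist_le_mul t ht _ hkmem
        _ ≤ (K:ℝ) * r := by
            apply mul_le_mul_of_nonneg_left _ (K.coe_nonneg)
            rw [Real.dist_eq]
            exact hk.trans hinvN
    apply Set.mem_biUnion (Finset.mem_range.mpr hkN)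
    rw [Metric.mem_closedBall]
    calc dist y (φ ((k:ℝ)/N)) ≤ dist y (φ t) + dist (φ t) (φ ((k:ℝ)/N)) := dist_triangle _ _ _
      _ ≤ r + (K:ℝ) * r := by rw [← hxd] at *; exact add_le_add h2 hd1
      _ = ((K:ℝ) + 1) * r := by ring
  calc volume (cthickening r S) ≤
      volume (⋃ k ∈ Finset.range N, Metric.closedBall (φ ((k:ℝ)/N)) (((K:ℝ) + 1) * r)) :=
        measure_mono hcover
    _ ≤ ∑ k ∈ Finset.range N, volume (Metric.closedBall (φ ((k:ℝ)/N)) (((K:ℝ) + 1) * r)) :=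
        measure_biUnion_finset_le _ _
    _ = ∑ k ∈ Finset.range N, ENNReal.ofReal ((((K:ℝ) + 1) * r) ^ Module.finrank ℝ V2) *
          volume (Metric.ball (0:V2) 1) := by
        refine Finset.sum_congr rfl fun k _ => ?_
        exact Measure.addHaar_closedBall volume _ (by positivity)
    _ = (N : ENNReal) * (ENNReal.ofReal ((((K:ℝ) + 1) * r) ^ Module.finrank ℝ V2) *
          volume (Metric.ball (0:V2) 1)) := by
        rw [Finset.sum_const, Finset.card_range, nsmul_eq_mul]
    _ ≤ ENNReal.ofReal (2 * ((K:ℝ) + 1)^2 * V * r) := by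
        have hfr : Module.finrank ℝ V2 = 2 := by simp
        rw [hfr]
        rw [show (N : ENNReal) = ENNReal.ofReal (N:ℝ) by simp,
          show volume (Metric.ball (0:V2) 1) = ENNReal.ofReal V from
            (ENNReal.ofReal_toReal (measure_ball_lt_top).ne).symm,
          ← ENNReal.ofReal_mul (by positivity), ← ENNReal.ofReal_mul (by positivity)]
        apply ENNReal.ofReal_le_ofReal
        have expand : (N:ℝ) * ((((K:ℝ) + 1) * r) ^ 2 * V)
            = ((N:ℝ)*r) * (((K:ℝ)+1)^2 * V * r) := by ring
        rw [expand]
        have h4 : (0:ℝ) ≤ ((K:ℝ)+1)^2 * V * r := by positivity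
        nlinarith

lemma aux_norm_uvec (θ : ℝ) : ‖uvec θ‖ = 1 := by
  rw [uvec, EuclideanSpace.norm_eq]
  simp [Fin.sum_univ_two, Real.norm_eq_abs, sq_abs]

lemma aux_norm_uperp (θ : ℝ) : ‖uperp θ‖ = 1 := by
  rw [uperp, EuclideanSpace.norm_eq]
  simp [Fin.sum_univ_two, Real.norm_eq_abs, sq_abs]

lemma aux_infEdist_translate (x p : V2) (S : Set V2) :
    EMetric.infEdist x ((· + p) '' S) = EMetric.infEdist (x - p) S := by
  have h := EMetric.infEdist_image (x := x - p) (t := S) (isometry_add_right p)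
  simpa [EMetric.infEdist] using h

lemma aux_circ_bound {A : Set V2} {F : V2 → V2} {i : ℕ} {CF r₀ : ℝ} (hCF : 0 ≤ CF)
    (hbd : ∀ x ∈ Bset A i ∩ cthickening r₀ (frontier A), ‖F (-x)‖ ≤ CF)
    (p : V2) (e : ℝ → V2) (he : ∀ θ, ‖e θ‖ = 1) {r : ℝ} (hr : 0 < r) (h2r : 2 * r ≤ r₀)
    {q : V2} (hq : q ∈ cthickening r ((· + p) '' frontier A)) :
    |∫ θ in (0:ℝ)..(2 * Real.pi), ((· + p) '' Bset A i).indicator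
        (fun x => (inner ℝ (F (p - x)) (e θ) : ℝ)) (q + r • uvec θ)| ≤ CF * (2 * Real.pi) := by
  have key : ∀ θ ∈ Set.uIoc (0:ℝ) (2 * Real.pi),
      ‖((· + p) '' Bset A i).indicator
        (fun x => (inner ℝ (F (p - x)) (e θ) : ℝ)) (q + r • uvec θ)‖ ≤ CF := by
    intro θ _
    set x : V2 := q + r • uvec θ with hx
    by_cases hmem : x ∈ (· + p) '' Bset A i
    · rw [Set.indicator_of_mem hmem]
      obtain ⟨b, hb, hbp⟩ := hmem
      have hxb : x - p = b := by rw [← hbp]; simpa using add_sub_cancel_right b p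
      have hcth : x - p ∈ cthickening r₀ (frontier A) := by
        rw [mem_cthickening_iff]
        have h1 : EMetric.infEdist (q - p) (frontier A) ≤ ENNReal.ofReal r := by
          rw [← aux_infEdist_translate q p (frontier A)]
          exact mem_cthickening_iff.mp hq
        have h2 : edist (x - p) (q - p) = ENNReal.ofReal r := by
          rw [edist_dist, dist_eq_norm]
          have : x - p - (q - p) = r • uvec θ := by rw [hx]; abel
          rw [this, norm_smul, aux_norm_uvec, Real.norm_eq_abs, abs_of_pos hr, mul_one]
        calc EMetric.infEdist (x - p) (frontier A)
            ≤ EMetric.infEdist (q - p) (frontier A) + edist (x - p) (q - p) :=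
              EMetric.infEdist_le_infEdist_add_edist
          _ ≤ ENNReal.ofReal r + ENNReal.ofReal r := by
              rw [h2]; exact add_le_add_left h1 _
          _ = ENNReal.ofReal (r + r) := (ENNReal.ofReal_add hr.le hr.le).symm
          _ ≤ ENNReal.ofReal r₀ := ENNReal.ofReal_le_ofReal (by linarith)
      have hK : x - p ∈ Bset A i ∩ cthickening r₀ (frontier A) := ⟨hxb ▸ hb, hcth⟩
      have hFp : F (p - x) = F (-(x - p)) := by rw [neg_sub]
      calc ‖(inner ℝ (F (p - x)) (e θ) : ℝ)‖ = |(inner ℝ (F (p - x)) (e θ) : ℝ)| := rfl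
        _ ≤ ‖F (p - x)‖ * ‖e θ‖ := abs_real_inner_le_norm _ _
        _ = ‖F (-(x - p))‖ := by rw [he θ, mul_one, hFp]
        _ ≤ CF := hbd _ hK
    · rw [Set.indicator_of_notMem hmem]
      simpa using hCF
  have := intervalIntegral.norm_integral_le_of_norm_le_const key
  rw [Real.norm_eq_abs] at this
  calc |∫ θ in (0:ℝ)..(2 * Real.pi), _| ≤ CF * |2 * Real.pi - 0| := this
    _ = CF * (2 * Real.pi) := by
        rw [sub_zero, abs_of_pos (by positivity)]

end Geometry


section Final

lemma aux_exists_CF {A : Set V2} (hA : IsCompact A) {i : ℕ} {F : V2 → V2} {r₀ : ℝ}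
    (hi : i = 1 ∨ i = 2)
    (hFcont : ContinuousOn (fun q => F (-q)) (Bset A i ∩ Metric.cthickening r₀ (frontier A))) :
    ∃ CF : ℝ, 0 ≤ CF ∧ ∀ x ∈ Bset A i ∩ cthickening r₀ (frontier A), ‖F (-x)‖ ≤ CF := by
  have hfr : IsCompact (frontier A) :=
    hA.of_isClosed_subset isClosed_frontier hA.isClosed.frontier_subset
  have hBclosed : IsClosed (Bset A i) := by
    rcases hi with h | h <;> subst h
    · simpa [Bset] using hA.isClosed
    · simp only [Bset]
      norm_num
  have hK : IsCompact (Bset A i ∩ cthickening r₀ (frontier A)) :=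
    hfr.cthickening.inter_left hBclosed
  obtain ⟨C, hC⟩ := hK.exists_bound_of_continuousOn hFcont
  exact ⟨max C 0, le_max_right _ _, fun x hx => (hC x hx).trans (le_max_left _ _)⟩

lemma aux_zfun_bound {A : Set V2} {F : V2 → V2} {i : ℕ} {CF r₀ : ℝ} (hCF : 0 ≤ CF)
    (hbd : ∀ x ∈ Bset A i ∩ cthickening r₀ (frontier A), ‖F (-x)‖ ≤ CF)
    {n : ℕ} (p : Fin n → V2) (zc : Fin n → ℝ) {r : ℝ} (hr : 0 < r) (h2r : 2 * r ≤ r₀)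
    (q : V2) :
    |zfun A F i p zc r q| ≤ ∑ j, |zc j| * (CF * (2 * Real.pi)) := by
  rw [zfun]
  refine (Finset.abs_sum_le_sum_abs _ _).trans (Finset.sum_le_sum fun j _ => ?_)
  by_cases hq : q ∈ cthickening r ((· + p j) '' frontier A)
  · rw [Set.indicator_of_mem hq, abs_mul]
    exact mul_le_mul_of_nonneg_left
      (aux_circ_bound hCF hbd (p j) uvec aux_norm_uvec hr h2r hq) (abs_nonneg _)
  · rw [Set.indicator_of_notMem hq, abs_zero]
    positivity

lemma aux_zfunC_bound {A : Set V2} {F : V2 → V2} {i : ℕ} {CF r₀ : ℝ} (hCF : 0 ≤ CF)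
    (hbd : ∀ x ∈ Bset A i ∩ cthickening r₀ (frontier A), ‖F (-x)‖ ≤ CF)
    {n : ℕ} (p : Fin n → V2) (zc : Fin n → ℝ) {r : ℝ} (hr : 0 < r) (h2r : 2 * r ≤ r₀)
    (q : V2) :
    |zfunC A F i p zc r q| ≤ ∑ j, |zc j| * (CF * (2 * Real.pi)) := by
  rw [zfunC]
  refine (Finset.abs_sum_le_sum_abs _ _).trans (Finset.sum_le_sum fun j _ => ?_)
  by_cases hq : q ∈ cthickening r ((· + p j) '' frontier A)
  · rw [Set.indicator_of_mem hq, abs_mul]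
    exact mul_le_mul_of_nonneg_left
      (aux_circ_bound hCF hbd (p j) uperp aux_norm_uperp hr h2r hq) (abs_nonneg _)
  · rw [Set.indicator_of_notMem hq, abs_zero]
    positivity

lemma aux_vol_union {A : Set V2} {K : NNReal} {φ : ℝ → V2}
    (hφ : LipschitzOnWith K φ (Set.Icc 0 1)) (him : φ '' Set.Icc 0 1 = frontier A)
    {n : ℕ} (p : Fin n → V2) :
    ∃ Cv : ℝ, 0 ≤ Cv ∧ ∀ r : ℝ, 0 < r → r ≤ 1 →
      volume (⋃ j, cthickening r ((· + p j) '' frontier A)) ≤ ENNReal.ofReal (Cv * r) := by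
  have hφj : ∀ j : Fin n, LipschitzOnWith K ((fun x => x + p j) ∘ φ) (Set.Icc 0 1) := by
    intro j
    have := (isometry_add_right (p j)).lipschitz.comp_lipschitzOnWith hφ
    rwa [one_mul] at this
  choose C hC0 hCb using fun j => aux_vol_cthickening_le (hφj j)
  refine ⟨∑ j, C j, Finset.sum_nonneg fun j _ => hC0 j, fun r hr hr1 => ?_⟩
  have him' : ∀ j : Fin n, (· + p j) '' frontier A
      = ((fun x => x + p j) ∘ φ) '' Set.Icc 0 1 := by
    intro j
    rw [Set.image_comp, him]
  calc volume (⋃ j, cthickening r ((· + p j) '' frontier A))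
      ≤ ∑' j, volume (cthickening r ((· + p j) '' frontier A)) := measure_iUnion_le _
    _ = ∑ j, volume (cthickening r ((· + p j) '' frontier A)) := tsum_fintype _
    _ ≤ ∑ j, ENNReal.ofReal (C j * r) := by
        refine Finset.sum_le_sum fun j _ => ?_
        rw [him' j]
        exact hCb j r hr hr1
    _ = ENNReal.ofReal (∑ j, C j * r) :=
        (ENNReal.ofReal_sum_of_nonneg fun j _ => mul_nonneg (hC0 j) hr.le).symm
    _ = ENNReal.ofReal ((∑ j, C j) * r) := by rw [Finset.sum_mul]

lemma aux_final_conv {β : ℝ} {ψ ψμ : ℝ → ℂ} (hβ1 : 1 ≤ β)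
    (hscal : ∀ c : ℝ, 0 < c → ∀ z : ℝ, ψμ z = (c : ℂ) * ψμ (c ^ (-1/β) * z))
    (hunif : ∀ M ε : ℝ, 0 < ε → ∀ᶠ (r : ℝ) in nhdsWithin (0:ℝ) (Set.Ioi 0), ∀ z : ℝ,
      |z| ≤ M → ‖(r : ℂ) * ψ (r ^ (-1/β) * z) - ψμ z‖ ≤ ε)
    (U : ℝ → Set V2) (w : ℝ → V2 → ℝ) (Cv M : ℝ)
    (hU : ∀ᶠ (r : ℝ) in nhdsWithin (0:ℝ) (Set.Ioi 0), MeasurableSet (U r) ∧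
      volume (U r) ≤ ENNReal.ofReal (Cv * r) ∧ ∀ q, |w r q| ≤ M) :
    Tendsto (fun r : ℝ => ∫ q in U r,
        ‖ψ (r ^ (-1/β) * w r q) - ψμ (r ^ (-1/β) * w r q)‖ ∂volume)
      (nhdsWithin 0 (Set.Ioi 0)) (nhds 0) := by
  rw [NormedAddCommGroup.tendsto_nhds_zero]
  intro ε hε
  set Cv' : ℝ := |Cv| + 1 with hCv'
  have hCv'0 : 0 < Cv' := by positivity
  set ε' : ℝ := ε / (2 * Cv') with hε'
  have hε'0 : 0 < ε' := by positivity
  filter_upwards [hU, hunif M ε' hε'0, self_mem_nhdsWithin] with r hUr hSr hrmem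
  have hr : (0:ℝ) < r := hrmem
  obtain ⟨hmeas, hvol, hw⟩ := hUr
  have hrC : ((r:ℝ):ℂ) ≠ 0 := by exact_mod_cast hr.ne'
  have hptwise : ∀ q : V2,
      ‖ψ (r ^ (-1/β) * w r q) - ψμ (r ^ (-1/β) * w r q)‖ ≤ r⁻¹ * ε' := by
    intro q
    have hz := hw q
    have hmu : ψμ (r ^ (-1/β) * w r q) = ((r:ℝ):ℂ)⁻¹ * ψμ (w r q) := by
      rw [hscal r hr (w r q), ← mul_assoc, inv_mul_cancel₀ hrC, one_mul]
    have hsplit : ψ (r ^ (-1/β) * w r q) - ψμ (r ^ (-1/β) * w r q)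
        = ((r:ℝ):ℂ)⁻¹ * (((r:ℝ):ℂ) * ψ (r ^ (-1/β) * w r q) - ψμ (w r q)) := by
      rw [hmu, mul_sub, ← mul_assoc, inv_mul_cancel₀ hrC, one_mul]
    rw [hsplit, norm_mul, norm_inv, Complex.norm_real, Real.norm_eq_abs, abs_of_pos hr]
    exact mul_le_mul_of_nonneg_left (hSr (w r q) hz) (by positivity)
  have hvol' : (volume (U r)).toReal ≤ Cv' * r := by
    have h1 : volume (U r) ≤ ENNReal.ofReal (Cv' * r) :=
      hvol.trans (ENNReal.ofReal_le_ofReal (by nlinarith [le_abs_self Cv]))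
    have := ENNReal.toReal_mono ENNReal.ofReal_ne_top h1
    rwa [ENNReal.toReal_ofReal (by positivity)] at this
  have hvolfin : volume (U r) < ⊤ := lt_of_le_of_lt hvol ENNReal.ofReal_lt_top
  have hInonneg : 0 ≤ ∫ q in U r,
      ‖ψ (r ^ (-1/β) * w r q) - ψμ (r ^ (-1/β) * w r q)‖ ∂volume :=
    setIntegral_nonneg hmeas fun q _ => norm_nonneg _
  have hIle : (∫ q in U r,
      ‖ψ (r ^ (-1/β) * w r q) - ψμ (r ^ (-1/β) * w r q)‖ ∂volume)
      ≤ (volume (U r)).toReal * (r⁻¹ * ε') := by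
    by_cases hint : IntegrableOn
        (fun q => ‖ψ (r ^ (-1/β) * w r q) - ψμ (r ^ (-1/β) * w r q)‖)
        (U r) volume
    · have hconst : IntegrableOn (fun _ : V2 => r⁻¹ * ε') (U r) volume :=
        integrableOn_const hvolfin.ne
      have := setIntegral_mono_on hint hconst hmeas (fun q _ => hptwise q)
      rwa [setIntegral_const, smul_eq_mul] at this
    · rw [integral_undef hint]
      positivity
  rw [Real.norm_eq_abs, abs_of_nonneg hInonneg]
  calc (∫ q in U r,
      ‖ψ (r ^ (-1/β) * w r q) - ψμ (r ^ (-1/β) * w r q)‖ ∂volume)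
      ≤ (volume (U r)).toReal * (r⁻¹ * ε') := hIle
    _ ≤ (Cv' * r) * (r⁻¹ * ε') := by
        apply mul_le_mul_of_nonneg_right hvol' (by positivity)
    _ = Cv' * ε' := by field_simp
    _ = ε / 2 := by rw [hε']; field_simp
    _ < ε := by linarith

end Final

/-- If `r ψ(r^{−1/β} z) → ψ_μ(z)` as `r ↓ 0` for characteristic
exponents of infinitely divisible laws, then `ψ_μ` is strictly `β`-stable, and `ψ` can
be replaced by `ψ_μ` in the boundary functionals, with an error that vanishes in `L¹`
on the parallel sets of the translated boundaries. -/
theorem stable_approximation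
    (A : Set V2) (uA : V2 → V2) (hA : IsJordanDomain A) (hreg : LipschitzRegular A uA)
    (i : ℕ) (hi : i = 1 ∨ i = 2) (F : V2 → V2) (r₀ : ℝ) (hr₀ : 0 < r₀)
    (hFmeas : Measurable fun q => F (-q))
    (hFcont : ContinuousOn (fun q => F (-q))
      (Bset A i ∩ Metric.cthickening r₀ (frontier A)))
    (β : ℝ) (hβ : β ∈ Set.Icc (1:ℝ) 2) (ψ ψμ : ℝ → ℂ)
    (hψ : IsIDExponent ψ) (hψμ : IsIDExponent ψμ)
    (hconv : ∀ z : ℝ, Tendsto (fun r : ℝ => (r : ℂ) * ψ (r ^ (-1/β) * z))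
      (nhdsWithin 0 (Set.Ioi 0)) (nhds (ψμ z))) :
    (∀ c : ℝ, 0 < c → ∀ z : ℝ, ψμ z = (c : ℂ) * ψμ (c ^ (-1/β) * z)) ∧
    (∀ (n : ℕ) (p : Fin n → V2) (zc : Fin n → ℝ),
      Tendsto (fun r : ℝ =>
          ∫ q in ⋃ j, Metric.cthickening r ((· + p j) '' frontier A),
            ‖ψ (r ^ (-1/β) * zfun A F i p zc r q) -
              ψμ (r ^ (-1/β) * zfun A F i p zc r q)‖ ∂volume)
        (nhdsWithin 0 (Set.Ioi 0)) (nhds 0)) ∧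
    (∀ (n : ℕ) (p : Fin n → V2) (zc : Fin n → ℝ),
      Tendsto (fun r : ℝ =>
          ∫ q in ⋃ j, Metric.cthickening r ((· + p j) '' frontier A),
            ‖ψ (r ^ (-1/β) * zfunC A F i p zc r q) -
              ψμ (r ^ (-1/β) * zfunC A F i p zc r q)‖ ∂volume)
        (nhdsWithin 0 (Set.Ioi 0)) (nhds 0)) := by
  have hβ1 : 1 ≤ β := hβ.1
  have partA := aux_scalingA hβ1 hconv
  have hunif := aux_unifT1 hβ1 partA (aux_limU hβ1 hconv) hψ.zero hψμ.zero hψ.bounded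
  obtain ⟨⟨K, φ, hφlip, -, -, hφim⟩, -, -⟩ := hreg
  obtain ⟨CF, hCF0, hCFb⟩ := aux_exists_CF hA.1 hi hFcont
  have hδ : 0 < min (r₀ / 2) 1 := lt_min (by linarith) one_pos
  refine ⟨partA, ?_, ?_⟩ <;> intro n p zc
  · obtain ⟨Cv, hCv0, hCvb⟩ := aux_vol_union hφlip hφim p
    apply aux_final_conv hβ1 partA hunif
      (fun r => ⋃ j, Metric.cthickening r ((· + p j) '' frontier A))
      (fun r q => zfun A F i p zc r q) Cv (∑ j, |zc j| * (CF * (2 * Real.pi)))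
    filter_upwards [Ioo_mem_nhdsGT_of_mem (Set.mem_Ico.mpr ⟨le_refl 0, hδ⟩)] with r hr
    obtain ⟨hr0, hrlt⟩ := hr
    have hr1 : r ≤ 1 := le_of_lt (lt_of_lt_of_le hrlt (min_le_right _ _))
    have h2r : 2 * r ≤ r₀ := by
      have := lt_of_lt_of_le hrlt (min_le_left _ _)
      linarith
    exact ⟨MeasurableSet.iUnion fun j => (isClosed_cthickening).measurableSet,
      hCvb r hr0 hr1, fun q => aux_zfun_bound hCF0 hCFb p zc hr0 h2r q⟩
  · obtain ⟨Cv, hCv0, hCvb⟩ := aux_vol_union hφlip hφim p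
    apply aux_final_conv hβ1 partA hunif
      (fun r => ⋃ j, Metric.cthickening r ((· + p j) '' frontier A))
      (fun r q => zfunC A F i p zc r q) Cv (∑ j, |zc j| * (CF * (2 * Real.pi)))
    filter_upwards [Ioo_mem_nhdsGT_of_mem (Set.mem_Ico.mpr ⟨le_refl 0, hδ⟩)] with r hr
    obtain ⟨hr0, hrlt⟩ := hr
    have hr1 : r ≤ 1 := le_of_lt (lt_of_lt_of_le hrlt (min_le_right _ _))
    have h2r : 2 * r ≤ r₀ := by
      have := lt_of_lt_of_le hrlt (min_le_left _ _)
      linarith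
    exact ⟨MeasurableSet.iUnion fun j => (isClosed_cthickening).measurableSet,
      hCvb r hr0 hr1, fun q => aux_zfunC_bound hCF0 hCFb p zc hr0 h2r q⟩
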